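/- Let A be a noetherian commutative ring graded by an abelian group ι, and let Q be a homogeneous ideal of A. Then Q is G-primary if and only if Q = 𝔮* for some primary ideal 𝔮 of A. -/

import Mathlib

open DirectSum

section aux

variable {ι : Type*} [AddCommGroup ι] [DecidableEq ι] {A : Type*} [CommRing A]
    (𝒜 : ι → AddSubgroup A) [GradedRing 𝒜]

/-- A homogeneous ideal contained in `J` is contained in the homogeneous core of `J`. -/
lemma IsGPrimaryAux.le_core {I J : Ideal A} (hI : I.IsHomogeneous 𝒜) (h : I ≤ J) :
    I ≤ (J.homogeneousCore 𝒜).toIdeal := by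
  conv_lhs => rw [← hI.toIdeal_homogeneousCore_eq_self]
  exact Ideal.homogeneousCore'_mono 𝒜 h

/-- The colon of a homogeneous ideal by a homogeneous element is homogeneous. -/
lemma IsGPrimaryAux.colon_isHomogeneous {Q : Ideal A} (hQ : Q.IsHomogeneous 𝒜)
    {d : ι} {a : A} (ha : a ∈ 𝒜 d) :
    (Q.colon (Ideal.span {a})).IsHomogeneous 𝒜 := by
  intro i b hb
  rw [Ideal.mem_colon_span_singleton] at hb ⊢
  have := hQ (i + d) hb
  rwa [DirectSum.coe_decompose_mul_add_of_right_mem 𝒜 ha] at this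

lemma IsGPrimaryAux.pow_isHomogeneous {I : Ideal A} (hI : I.IsHomogeneous 𝒜) (n : ℕ) :
    (I ^ n).IsHomogeneous 𝒜 := by
  induction n with
  | zero => simpa [pow_zero, Ideal.one_eq_top] using Ideal.IsHomogeneous.top 𝒜
  | succ n ih => rw [pow_succ]; exact ih.mul hI

end aux

/-- A homogeneous ideal `Q` of a graded ring `A` is `G`-primary if `Q ≠ A` and for all
homogeneous ideals `I`, `J` with `I·J ⊆ Q` and `J ⊄ Q`, one has `I ⊆ (√Q)*`. -/
def Ideal.IsGPrimary {ι : Type*} [AddCommGroup ι] [DecidableEq ι] {A : Type*} [CommRing A]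
    (𝒜 : ι → AddSubgroup A) [GradedRing 𝒜] (Q : Ideal A) : Prop :=
  Q ≠ ⊤ ∧ ∀ I J : Ideal A, I.IsHomogeneous 𝒜 → J.IsHomogeneous 𝒜 →
    I * J ≤ Q → ¬ J ≤ Q → I ≤ (Q.radical.homogeneousCore 𝒜).toIdeal

/-- A homogeneous ideal `Q` of a noetherian graded ring is `G`-primary if and only if
`Q = 𝔮*` (the homogeneous core) for some primary ideal `𝔮`. -/
theorem Ideal.isGPrimary_iff {ι : Type*} [AddCommGroup ι] [DecidableEq ι]
    {A : Type*} [CommRing A] [IsNoetherianRing A]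
    (𝒜 : ι → AddSubgroup A) [GradedRing 𝒜] (Q : Ideal A) (hQ : Q.IsHomogeneous 𝒜) :
    Q.IsGPrimary 𝒜 ↔ ∃ 𝔮 : Ideal A, 𝔮.IsPrimary ∧ Q = (𝔮.homogeneousCore 𝒜).toIdeal := by
  classical
  constructor
  · rintro ⟨hQtop, hGp⟩
    obtain ⟨t, htinf, htpr, htrad, -⟩ := Ideal.IsLasker.minimal (Ideal.isLasker A A) Q
    have htne : t.Nonempty := by
      rcases Finset.eq_empty_or_nonempty t with rfl | h
      · exact absurd (htinf.symm.trans (by simp)) hQtop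
      · exact h
    -- pick a component with minimal radical
    obtain ⟨r, hrmem, hrmin⟩ := (t.image Ideal.radical).exists_minimal
      (htne.image Ideal.radical)
    obtain ⟨q, hqt, rfl⟩ := Finset.mem_image.mp hrmem
    refine ⟨q, htpr hqt, le_antisymm ?_ ?_⟩
    · exact IsGPrimaryAux.le_core 𝒜 hQ (htinf ▸ Finset.inf_le hqt)
    · -- every homogeneous element of `q` lies in `Q`
      have key : ∀ (d : ι) (a : A), a ∈ 𝒜 d → a ∈ q → a ∈ Q := by
        intro d a had haq
        by_contra haQ
        have hcol : Q.colon (Ideal.span {a}) ≤ (Q.radical.homogeneousCore 𝒜).toIdeal := by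
          refine hGp _ _ (IsGPrimaryAux.colon_isHomogeneous 𝒜 hQ had)
            (Ideal.homogeneous_span 𝒜 {a} (by rintro x rfl; exact ⟨d, had⟩)) ?_ ?_
          · rw [Ideal.mul_le]
            intro r hr s hs
            rw [Ideal.mem_span_singleton] at hs
            obtain ⟨c, rfl⟩ := hs
            rw [Ideal.mem_colon_span_singleton] at hr
            have h := Ideal.mul_mem_right c Q hr
            have h2 : r * (a * c) = r * a * c := by ring
            rw [h2]; exact h
          · rw [Ideal.span_singleton_le_iff_mem]; exact haQ
        have hcol' : Q.colon (Ideal.span {a}) ≤ q.radical :=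
          le_trans hcol (le_trans (Ideal.toIdeal_homogeneousCore_le 𝒜 _)
            (Ideal.radical_mono (htinf ▸ Finset.inf_le hqt)))
        have herase : (t.erase q).inf id ≤ Q.colon (Ideal.span {a}) := by
          intro c hc
          rw [Ideal.mem_colon_span_singleton]
          have : c * a ∈ t.inf id := by
            rw [Submodule.mem_finsetInf]
            intro J hJ
            rcases eq_or_ne J q with rfl | hne
            · exact Ideal.mul_mem_left _ _ haq
            · exact Ideal.mul_mem_right _ _
                ((Finset.inf_le (Finset.mem_erase.mpr ⟨hne, hJ⟩) : (t.erase q).inf id ≤ id J) hc)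
          exact htinf ▸ this
        obtain ⟨J, hJmem, hJle⟩ := (Ideal.isPrime_radical (htpr hqt)).inf_le'.mp
          (le_trans herase hcol')
        have hJq : J ≠ q := (Finset.mem_erase.mp hJmem).1
        have hJt : J ∈ t := (Finset.mem_erase.mp hJmem).2
        have hradle : Ideal.radical J ≤ q.radical := by
          have := Ideal.radical_mono hJle
          rwa [Ideal.radical_idem] at this
        have hradne : Ideal.radical J ≠ q.radical := by
          simpa [Submodule.colon_univ] using htrad (Finset.mem_coe.mpr hJt) (Finset.mem_coe.mpr hqt) hJq
        exact hradne (le_antisymm hradle (hrmin (Finset.mem_image_of_mem _ hJt) hradle))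
      intro x hx
      have hxq : ∀ i, (decompose 𝒜 x i : A) ∈ Q := by
        intro i
        refine key i _ (SetLike.coe_mem _) ?_
        exact Ideal.toIdeal_homogeneousCore_le 𝒜 q ((q.homogeneousCore 𝒜).isHomogeneous i hx)
      rw [← DirectSum.sum_support_decompose 𝒜 x]
      exact Ideal.sum_mem _ fun i _ => hxq i
  · rintro ⟨𝔮, h𝔮, rfl⟩
    rw [Ideal.isPrimary_iff] at h𝔮
    obtain ⟨h𝔮top, h𝔮p⟩ := h𝔮
    constructor
    · intro h
      exact h𝔮top (top_le_iff.mp (h ▸ Ideal.toIdeal_homogeneousCore_le 𝒜 𝔮))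
    · intro I J hI hJ hIJ hJQ
      have hJq : ¬ J ≤ 𝔮 := fun h => hJQ (IsGPrimaryAux.le_core 𝒜 hJ h)
      obtain ⟨y, hyJ, hyq⟩ := SetLike.not_le_iff_exists.mp hJq
      have hIrad : I ≤ 𝔮.radical := by
        intro x hx
        have : y * x ∈ 𝔮 := by
          have : x * y ∈ I * J := Ideal.mul_mem_mul hx hyJ
          have := hIJ this
          have := Ideal.toIdeal_homogeneousCore_le 𝒜 𝔮 this
          rwa [mul_comm] at this
        rcases h𝔮p this with h | h
        · exact absurd h hyq
        · exact h
      obtain ⟨n, hn⟩ := Ideal.exists_pow_le_of_le_radical_of_fg hIrad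
        (IsNoetherian.noetherian I)
      have hInQ : I ^ n ≤ (𝔮.homogeneousCore 𝒜).toIdeal :=
        IsGPrimaryAux.le_core 𝒜 (IsGPrimaryAux.pow_isHomogeneous 𝒜 hI n) hn
      refine IsGPrimaryAux.le_core 𝒜 hI ?_
      intro x hx
      rw [Ideal.mem_radical_iff]
      exact ⟨n, hInQ (Ideal.pow_mem_pow hx n)⟩
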